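/- Let n ≥ 2 and 2 ≤ q ≤ n be integers and c₀, c₄ ∈ ℂ. Define c₁ = √((q+2)(q−1))·((c₄ − c₀)·q(q+1) + 4c₀(n+3)²) / ((n+3)·(2(n+4)(n+2) − (q+2)(q−1))), c₂ = 3(c₀ + c₄)·√((q+2)(q+1)q(q−1)) / (2(n+3)² − q(q+1)), and c₃ = √((q+2)(q−1))·((c₀ − c₄)·q(q+1) + 4c₄(n+3)²) / ((n+3)·(2(n+4)(n+2) − (q+2)(q−1))). Then both denominators are nonzero, and the functions L_j(ρ) = c_j·ρ^n (j = 0,…,4) satisfy, for every ρ > 0: L₁'(ρ) − (√(q(q+1))/(3ρ))·L₂(ρ) + (3/ρ)·L₁(ρ) − (2√((q+2)(q−1))/ρ)·L₀(ρ) = 0; L₂'(ρ) − (3√(q(q+1))/(4ρ))·(L₁(ρ) + L₃(ρ)) + (3/ρ)·L₂(ρ) = 0; and L₃'(ρ) − (√(q(q+1))/(3ρ))·L₂(ρ) + (3/ρ)·L₃(ρ) − (2√((q+2)(q−1))/ρ)·L₄(ρ) = 0. -/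

import Mathlib

/-- `√((q+2)(q−1))` as a complex number. -/
noncomputable def sqQA (q : ℕ) : ℂ := (Real.sqrt (((q : ℝ) + 2) * ((q : ℝ) - 1)) : ℝ)

/-- `√(q(q+1))` as a complex number. -/
noncomputable def sqQB (q : ℕ) : ℂ := (Real.sqrt ((q : ℝ) * ((q : ℝ) + 1)) : ℝ)

/-- `√((q+2)(q+1)q(q−1))` as a complex number. -/
noncomputable def sqQC (q : ℕ) : ℂ :=
  (Real.sqrt (((q : ℝ) + 2) * ((q : ℝ) + 1) * (q : ℝ) * ((q : ℝ) - 1)) : ℝ)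

/-- The coefficient `c₁` determined by `c₀, c₄`. -/
noncomputable def c1coef (n q : ℕ) (c0 c4 : ℂ) : ℂ :=
  sqQA q * ((c4 - c0) * (q : ℂ) * ((q : ℂ) + 1) + 4 * c0 * ((n : ℂ) + 3) ^ 2) /
    (((n : ℂ) + 3) * (2 * ((n : ℂ) + 4) * ((n : ℂ) + 2) - ((q : ℂ) + 2) * ((q : ℂ) - 1)))

/-- The coefficient `c₂` determined by `c₀, c₄`. -/
noncomputable def c2coef (n q : ℕ) (c0 c4 : ℂ) : ℂ :=
  3 * (c0 + c4) * sqQC q / (2 * ((n : ℂ) + 3) ^ 2 - (q : ℂ) * ((q : ℂ) + 1))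

/-- The coefficient `c₃` determined by `c₀, c₄`. -/
noncomputable def c3coef (n q : ℕ) (c0 c4 : ℂ) : ℂ :=
  sqQA q * ((c0 - c4) * (q : ℂ) * ((q : ℂ) + 1) + 4 * c4 * ((n : ℂ) + 3) ^ 2) /
    (((n : ℂ) + 3) * (2 * ((n : ℂ) + 4) * ((n : ℂ) + 2) - ((q : ℂ) + 2) * ((q : ℂ) - 1)))

/-- For integers `n ≥ 2`, `2 ≤ q ≤ n` and `c₀, c₄ ∈ ℂ`, with `c₁, c₂, c₃` defined by the
formulas above, both denominators are nonzero and the functions `L_j(ρ) = c_j ρ^n` satisfy,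
for every `ρ > 0`, the ODE system of the conformally flat momentum constraint. -/
theorem stmt_9 (n q : ℕ) (hn : 2 ≤ n) (hq2 : 2 ≤ q) (hqn : q ≤ n) (c0 c4 : ℂ) :
    (((n : ℂ) + 3) * (2 * ((n : ℂ) + 4) * ((n : ℂ) + 2) - ((q : ℂ) + 2) * ((q : ℂ) - 1)) ≠ 0 ∧
      2 * ((n : ℂ) + 3) ^ 2 - (q : ℂ) * ((q : ℂ) + 1) ≠ 0) ∧
    ∀ ρ : ℝ, 0 < ρ →
      (deriv (fun r : ℝ => c1coef n q c0 c4 * (r : ℂ) ^ n) ρ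
          - sqQB q / (3 * (ρ : ℂ)) * (c2coef n q c0 c4 * (ρ : ℂ) ^ n)
          + 3 / (ρ : ℂ) * (c1coef n q c0 c4 * (ρ : ℂ) ^ n)
          - 2 * sqQA q / (ρ : ℂ) * (c0 * (ρ : ℂ) ^ n) = 0) ∧
      (deriv (fun r : ℝ => c2coef n q c0 c4 * (r : ℂ) ^ n) ρ
          - 3 * sqQB q / (4 * (ρ : ℂ)) *
              (c1coef n q c0 c4 * (ρ : ℂ) ^ n + c3coef n q c0 c4 * (ρ : ℂ) ^ n)
          + 3 / (ρ : ℂ) * (c2coef n q c0 c4 * (ρ : ℂ) ^ n) = 0) ∧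
      (deriv (fun r : ℝ => c3coef n q c0 c4 * (r : ℂ) ^ n) ρ
          - sqQB q / (3 * (ρ : ℂ)) * (c2coef n q c0 c4 * (ρ : ℂ) ^ n)
          + 3 / (ρ : ℂ) * (c3coef n q c0 c4 * (ρ : ℂ) ^ n)
          - 2 * sqQA q / (ρ : ℂ) * (c4 * (ρ : ℂ) ^ n) = 0) := by

  have hq2R : (2:ℝ) ≤ (q:ℝ) := by exact_mod_cast hq2
  have hqnR : (q:ℝ) ≤ (n:ℝ) := by exact_mod_cast hqn
  have hA2 : sqQA q ^ 2 = ((q:ℂ) + 2) * ((q:ℂ) - 1) := by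
    unfold sqQA
    rw [← Complex.ofReal_pow, Real.sq_sqrt (by nlinarith)]
    push_cast; ring
  have hB2 : sqQB q ^ 2 = (q:ℂ) * ((q:ℂ) + 1) := by
    unfold sqQB
    rw [← Complex.ofReal_pow, Real.sq_sqrt (by nlinarith)]
    push_cast; ring
  have hC : sqQC q = sqQA q * sqQB q := by
    unfold sqQA sqQB sqQC
    have h : ((q:ℝ) + 2) * ((q:ℝ) + 1) * (q:ℝ) * ((q:ℝ) - 1)
        = (((q:ℝ) + 2) * ((q:ℝ) - 1)) * ((q:ℝ) * ((q:ℝ) + 1)) := by ring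
    rw [h, Real.sqrt_mul (by nlinarith), Complex.ofReal_mul]
  have hDr : (0:ℝ) < 2 * ((n:ℝ) + 3) ^ 2 - (q:ℝ) * ((q:ℝ) + 1) := by nlinarith
  have hD0 : 2 * ((n:ℂ) + 3) ^ 2 - (q:ℂ) * ((q:ℂ) + 1) ≠ 0 := by
    have : ((2 * ((n:ℝ) + 3) ^ 2 - (q:ℝ) * ((q:ℝ) + 1) : ℝ) : ℂ)
        = 2 * ((n:ℂ) + 3) ^ 2 - (q:ℂ) * ((q:ℂ) + 1) := by push_cast; ring
    rw [← this]
    exact_mod_cast hDr.ne'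
  have hN : ((n:ℂ) + 3) ≠ 0 := by
    have : (((n:ℝ) + 3 : ℝ) : ℂ) = (n:ℂ) + 3 := by push_cast; ring
    rw [← this]
    have : (0:ℝ) < (n:ℝ) + 3 := by positivity
    exact_mod_cast this.ne'
  have hEq : 2 * ((n:ℂ) + 4) * ((n:ℂ) + 2) - ((q:ℂ) + 2) * ((q:ℂ) - 1)
      = 2 * ((n:ℂ) + 3) ^ 2 - (q:ℂ) * ((q:ℂ) + 1) := by ring
  have key1 : ((n:ℂ) + 3) * c1coef n q c0 c4 - sqQB q / 3 * c2coef n q c0 c4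
      - 2 * sqQA q * c0 = 0 := by
    unfold c1coef c2coef
    rw [hC, hEq]
    field_simp [show ((n:ℂ) + 3) ^ 2 * 2 - (q:ℂ) * ((q:ℂ) + 1) ≠ 0 by rw [mul_comm]; exact hD0]
    linear_combination (-sqQA q * (c0 + c4)) * hB2
  have key3 : ((n:ℂ) + 3) * c3coef n q c0 c4 - sqQB q / 3 * c2coef n q c0 c4
      - 2 * sqQA q * c4 = 0 := by
    unfold c3coef c2coef
    rw [hC, hEq]
    field_simp [show ((n:ℂ) + 3) ^ 2 * 2 - (q:ℂ) * ((q:ℂ) + 1) ≠ 0 by rw [mul_comm]; exact hD0]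
    linear_combination (-sqQA q * (c0 + c4)) * hB2
  have key2 : ((n:ℂ) + 3) * c2coef n q c0 c4
      - 3 * sqQB q / 4 * (c1coef n q c0 c4 + c3coef n q c0 c4) = 0 := by
    unfold c1coef c2coef c3coef
    rw [hC, hEq]
    field_simp
    ring
  refine ⟨⟨by rw [hEq]; exact mul_ne_zero hN hD0, hD0⟩, ?_⟩
  intro ρ hρ
  have hρC : (ρ:ℂ) ≠ 0 := by exact_mod_cast hρ.ne'
  have hd : ∀ c : ℂ, deriv (fun r : ℝ => c * (r:ℂ) ^ n) ρ
      = c * (n:ℂ) * (ρ:ℂ) ^ (n - 1) := by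
    intro c
    have h1 : HasDerivAt (fun r : ℝ => ((r:ℂ)) ^ n) ((n:ℂ) * (ρ:ℂ) ^ (n - 1)) ρ :=
      (hasDerivAt_pow n ((ρ:ℂ))).comp_ofReal
    have h2 := (h1.const_mul c).deriv
    rw [h2]; ring
  have hpow : (ρ:ℂ) ^ n = (ρ:ℂ) ^ (n - 1) * (ρ:ℂ) := by
    rw [← pow_succ, Nat.sub_add_cancel (le_trans one_le_two hn)]
  refine ⟨?_, ?_, ?_⟩
  · rw [hd, hpow]
    field_simp
    linear_combination (3 * (ρ:ℂ) ^ (n - 1)) * key1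
  · rw [hd, hpow]
    field_simp
    linear_combination (4 * (ρ:ℂ) ^ (n - 1)) * key2
  · rw [hd, hpow]
    field_simp
    linear_combination (3 * (ρ:ℂ) ^ (n - 1)) * key3
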